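/- Let G be a connected simple graph with at least 3 vertices such that det(G) ≠ 1. Then (1/2)·det(G) ≤ det'(G) ≤ det(G), i.e. det(G) ≤ 2·det'(G) and det'(G) ≤ det(G). -/

import Mathlib

/-- `S` is a vertex determining set of `G`: the only automorphism of `G`
fixing every vertex of `S` is the identity. -/
def IsVertexDetSet {V : Type*} (G : SimpleGraph V) (S : Set V) : Prop :=
  ∀ φ : G ≃g G, (∀ v ∈ S, φ v = v) → ∀ w, φ w = w

/-- `T` is an edge determining set of `G`: `T` consists of edges of `G`, and the only
automorphism of `G` mapping each edge of `T` to itself (as an unordered pair) is the identity. -/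
def IsEdgeDetSet {V : Type*} (G : SimpleGraph V) (T : Set (Sym2 V)) : Prop :=
  T ⊆ G.edgeSet ∧ ∀ φ : G ≃g G, (∀ e ∈ T, Sym2.map φ e = e) → ∀ w, φ w = w

/-- The determining number `det(G)`: the minimum size of a vertex determining set. -/
noncomputable def detNum {V : Type*} (G : SimpleGraph V) : ℕ :=
  sInf {k | ∃ S : Finset V, S.card = k ∧ IsVertexDetSet G ↑S}

/-- The determining index `det'(G)`: the minimum size of an edge determining set. -/
noncomputable def detIndex {V : Type*} (G : SimpleGraph V) : ℕ :=
  sInf {k | ∃ T : Finset (Sym2 V), T.card = k ∧ IsEdgeDetSet G ↑T}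

private lemma iso_dist_le' {V : Type*} {G : SimpleGraph V} (φ : G ≃g G)
    (hconn : G.Connected) (u v : V) : G.dist (φ u) (φ v) ≤ G.dist u v := by
  obtain ⟨p, hp⟩ := hconn.exists_walk_length_eq_dist u v
  calc G.dist (φ u) (φ v) ≤ (p.map φ.toHom).length := SimpleGraph.dist_le _
    _ = G.dist u v := by rw [SimpleGraph.Walk.length_map, hp]

private lemma iso_dist_eq' {V : Type*} {G : SimpleGraph V} (φ : G ≃g G)
    (hconn : G.Connected) (u v : V) : G.dist (φ u) (φ v) = G.dist u v := by
  refine le_antisymm (iso_dist_le' φ hconn u v) ?_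
  have h := iso_dist_le' φ.symm hconn (φ u) (φ v)
  simpa using h

private lemma exists_step' {V : Type*} {G : SimpleGraph V} (hconn : G.Connected)
    {u v : V} (h : u ≠ v) : ∃ n, G.Adj u n ∧ G.dist n v + 1 = G.dist u v := by
  obtain ⟨p, hp⟩ := hconn.exists_walk_length_eq_dist u v
  cases p with
  | nil => exact absurd rfl h
  | cons hadj q =>
    rename_i n
    refine ⟨n, hadj, ?_⟩
    rw [SimpleGraph.Walk.length_cons] at hp
    have h1 : G.dist n v ≤ q.length := SimpleGraph.dist_le q
    have h2 : G.dist u v ≤ G.dist u n + G.dist n v := hconn.dist_triangle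
    have h3 : G.dist u n = 1 := SimpleGraph.dist_eq_one_iff_adj.mpr hadj
    omega

theorem detIndex_bounds {V : Type*} [Fintype V] (G : SimpleGraph V)
    (hconn : G.Connected) (hcard : 3 ≤ Fintype.card V) (hdet : detNum G ≠ 1) :
    detNum G ≤ 2 * detIndex G ∧ detIndex G ≤ detNum G := by
  classical
  have hVmem : detNum G ∈ {k | ∃ S : Finset V, S.card = k ∧ IsVertexDetSet G ↑S} :=
    Nat.sInf_mem ⟨Finset.univ.card, Finset.univ, rfl, fun φ h w => h w (by simp)⟩
  obtain ⟨D, hDcard, hDdet⟩ := hVmem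
  -- construct an edge determining set of size at most detNum G
  have hT0 : ∃ T0 : Finset (Sym2 V), T0.card ≤ detNum G ∧ IsEdgeDetSet G ↑T0 := by
    rcases Nat.lt_or_ge (detNum G) 2 with hd | hd
    · -- detNum G = 0
      have hd0 : detNum G = 0 := by omega
      have hDe : D = ∅ := Finset.card_eq_zero.mp (hDcard.trans hd0)
      refine ⟨∅, by simp, by simp, ?_⟩
      intro φ _ w
      apply hDdet φ _ w
      intro v hv
      rw [hDe] at hv
      simp at hv
    · -- detNum G ≥ 2
      obtain ⟨x1, hx1D, x2, hx2D, hne21⟩ := Finset.one_lt_card.mp (by omega : 1 < D.card)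
      have hne : x1 ≠ x2 := hne21
      have hmpos : 0 < G.dist x1 x2 := hconn.pos_dist_of_ne hne
      -- a neighbor of x toward x1, for x ≠ x1
      have nbrspec : ∀ x : V, x ≠ x1 → ∃ n, G.Adj x n ∧ G.dist n x1 + 1 = G.dist x x1 :=
        fun x hx => exists_step' hconn hx
      choose! nbr hnbrA hnbrD using nbrspec
      set Drest := (D.erase x1).erase x2 with hDrest
      have hDrestcard : Drest.card = D.card - 2 := by
        rw [hDrest, Finset.card_erase_of_mem (Finset.mem_erase.mpr ⟨hne.symm, hx2D⟩),
          Finset.card_erase_of_mem hx1D]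
        omega
      -- the two special edges
      have hspec : ∃ e1 e2 : Sym2 V, e1 ∈ G.edgeSet ∧ e2 ∈ G.edgeSet ∧
          ∀ φ : G ≃g G, Sym2.map φ e1 = e1 → Sym2.map φ e2 = e2 → φ x1 = x1 ∧ φ x2 = x2 := by
        rcases Nat.lt_or_ge (G.dist x1 x2) 2 with hm | hm
        · -- x1 and x2 adjacent
          have hm1 : G.dist x1 x2 = 1 := by omega
          have hadj12 : G.Adj x1 x2 := SimpleGraph.dist_eq_one_iff_adj.mp hm1
          have hz : ∃ z : V, z ≠ x1 ∧ z ≠ x2 := by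
            by_contra hc
            push_neg at hc
            have hsub : (Finset.univ : Finset V) ⊆ {x1, x2} := by
              intro z _
              rcases eq_or_ne z x1 with rfl | hz1
              · simp
              · simp [hc z hz1]
            have hle := Finset.card_le_card hsub
            have h2 : ({x1, x2} : Finset V).card ≤ 2 :=
              le_trans (Finset.card_insert_le _ _) (by simp)
            rw [Finset.card_univ] at hle
            omega
          obtain ⟨z, hz1, hz2⟩ := hz
          obtain ⟨p⟩ := hconn x1 z
          obtain ⟨d, _, hdfst, hdsnd⟩ := p.exists_boundary_dart {x1, x2}
            (by simp) (by simp [hz1, hz2])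
          refine ⟨s(x1, x2), s(d.fst, d.snd), (G.mem_edgeSet).mpr hadj12,
            (G.mem_edgeSet).mpr d.adj, ?_⟩
          intro φ h1 h2
          rw [Sym2.map_pair_eq, Sym2.eq_iff] at h1 h2
          rcases h1 with ⟨ha, hb⟩ | ⟨ha, hb⟩
          · exact ⟨ha, hb⟩
          · exfalso
            rcases hdfst with hf | hf
            · -- d.fst = x1
              rcases h2 with ⟨h, _⟩ | ⟨h, _⟩
              · rw [hf] at h; rw [h] at ha; exact hne ha
              · rw [hf] at h; rw [ha] at h; exact hdsnd (by simp [← h])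
            · rcases h2 with ⟨h, _⟩ | ⟨h, _⟩
              · rw [hf] at h; rw [h] at hb; exact hne hb.symm
              · rw [hf] at h; rw [hb] at h; exact hdsnd (by simp [← h])
        · -- dist x1 x2 ≥ 2
          obtain ⟨p1, hp1A, hp1D⟩ := exists_step' hconn hne
          have hp1x2 : x2 ≠ p1 := by
            intro h
            rw [← h, SimpleGraph.dist_self] at hp1D
            omega
          obtain ⟨q, hqA, hqD⟩ := exists_step' hconn hp1x2
          have hc1 : G.dist x2 p1 = G.dist p1 x2 := SimpleGraph.dist_comm
          refine ⟨s(x1, p1), s(x2, q), (G.mem_edgeSet).mpr hp1A,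
            (G.mem_edgeSet).mpr hqA, ?_⟩
          intro φ h1 h2
          rw [Sym2.map_pair_eq, Sym2.eq_iff] at h1 h2
          have hd12 := iso_dist_eq' φ hconn x1 x2
          rcases h1 with ⟨ha1, hb1⟩ | ⟨ha1, hb1⟩ <;>
            rcases h2 with ⟨ha2, hb2⟩ | ⟨ha2, hb2⟩
          · exact ⟨ha1, ha2⟩
          · -- φ x1 = x1, φ x2 = q
            exfalso
            rw [ha1, ha2] at hd12
            have ht : G.dist x1 q ≤ G.dist x1 p1 + G.dist p1 q := hconn.dist_triangle
            have h3 : G.dist x1 p1 = 1 := SimpleGraph.dist_eq_one_iff_adj.mpr hp1A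
            have hc2 : G.dist p1 q = G.dist q p1 := SimpleGraph.dist_comm
            omega
          · -- φ x1 = p1, φ x2 = x2
            exfalso
            rw [ha1, ha2] at hd12
            omega
          · -- φ x1 = p1, φ x2 = q
            exfalso
            rw [ha1, ha2] at hd12
            have hc2 : G.dist p1 q = G.dist q p1 := SimpleGraph.dist_comm
            omega
      obtain ⟨e1, e2, he1E, he2E, hkey⟩ := hspec
      refine ⟨insert e1 (insert e2 (Drest.image (fun x => s(x, nbr x)))), ?_, ?_, ?_⟩
      · have c1 := Finset.card_insert_le e1 (insert e2 (Drest.image (fun x => s(x, nbr x))))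
        have c2 := Finset.card_insert_le e2 (Drest.image (fun x => s(x, nbr x)))
        have c3 := Finset.card_image_le (s := Drest) (f := fun x => s(x, nbr x))
        omega
      · intro e he
        simp only [Finset.coe_insert, Set.mem_insert_iff, Finset.coe_image, Set.mem_image,
          Finset.mem_coe] at he
        rcases he with rfl | rfl | ⟨x, hx, rfl⟩
        · exact he1E
        · exact he2E
        · have hxne : x ≠ x1 := by
            rw [hDrest] at hx
            exact (Finset.mem_erase.mp (Finset.mem_erase.mp hx).2).1
          exact (G.mem_edgeSet).mpr (hnbrA x hxne)
      · intro φ hfix w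
        have h1 := hfix e1 (by simp)
        have h2 := hfix e2 (by simp)
        obtain ⟨hfx1, hfx2⟩ := hkey φ h1 h2
        apply hDdet φ _ w
        intro v hv
        rcases eq_or_ne v x1 with rfl | hv1
        · exact hfx1
        rcases eq_or_ne v x2 with rfl | hv2
        · exact hfx2
        have hvD : v ∈ Drest := by
          rw [hDrest]
          exact Finset.mem_erase.mpr ⟨hv2, Finset.mem_erase.mpr ⟨hv1, hv⟩⟩
        have h3 := hfix (s(v, nbr v)) (by
          simp only [Finset.coe_insert, Set.mem_insert_iff, Finset.coe_image, Set.mem_image,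
            Finset.mem_coe]
          exact Or.inr (Or.inr ⟨v, hvD, rfl⟩))
        rw [Sym2.map_pair_eq, Sym2.eq_iff] at h3
        rcases h3 with ⟨h, _⟩ | ⟨h, _⟩
        · exact h
        · exfalso
          have hdd := iso_dist_eq' φ hconn v x1
          rw [h, hfx1] at hdd
          have hstep := hnbrD v hv1
          omega
  obtain ⟨T0, hT0card, hT0det⟩ := hT0
  have hIle : detIndex G ≤ detNum G :=
    le_trans (Nat.sInf_le ⟨T0, rfl, hT0det⟩) hT0card
  have hEmem : detIndex G ∈ {k | ∃ T : Finset (Sym2 V), T.card = k ∧ IsEdgeDetSet G ↑T} :=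
    Nat.sInf_mem ⟨T0.card, T0, rfl, hT0det⟩
  obtain ⟨T, hTcard, hTsub, hTdet⟩ := hEmem
  set S := T.biUnion (fun e => {e.out.1, e.out.2}) with hS
  have hScard : S.card ≤ 2 * T.card := by
    refine le_trans Finset.card_biUnion_le ?_
    calc ∑ e ∈ T, ({e.out.1, e.out.2} : Finset V).card
        ≤ ∑ _e ∈ T, 2 := Finset.sum_le_sum (fun e _ =>
          le_trans (Finset.card_insert_le _ _) (by simp))
      _ = 2 * T.card := by rw [Finset.sum_const, smul_eq_mul, mul_comm]
  have hout : ∀ e : Sym2 V, s(e.out.1, e.out.2) = e := by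
    intro e
    exact Quot.out_eq e
  have hSdet : IsVertexDetSet G ↑S := by
    intro φ hfix w
    apply hTdet φ _ w
    intro e he
    have hmem : ∀ x ∈ ({e.out.1, e.out.2} : Finset V), x ∈ (S : Set V) := by
      intro x hx
      exact Finset.mem_coe.mpr (Finset.mem_biUnion.mpr ⟨e, Finset.mem_coe.mp he, hx⟩)
    have ha := hfix _ (hmem e.out.1 (by simp))
    have hb := hfix _ (hmem e.out.2 (by simp))
    rw [← hout e, Sym2.map_pair_eq, ha, hb]
  have hNle : detNum G ≤ S.card := Nat.sInf_le ⟨S, rfl, hSdet⟩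
  constructor
  · omega
  · exact hIle
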